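/- Let b₁,…,b_n be an LLL-reduced basis of a lattice in a real inner product space, with Gram–Schmidt orthogonalization b₁^*,…,b_n^*. Then for every lattice vector x = Σᵢ mᵢbᵢ (mᵢ ∈ ℤ) one has |mᵢ|·‖bᵢ^*‖ ≤ (3/√2)^{n−i}·‖x‖ for 1 ≤ i ≤ n. -/

import Mathlib

open Module
open scoped RealInnerProductSpace

/-- The Gram–Schmidt orthogonalization of a family of vectors indexed by `Fin n`. -/
noncomputable def gramSchmidtFin {n : ℕ} [NeZero n] {E : Type*}
    [NormedAddCommGroup E] [InnerProductSpace ℝ E] (b : Fin n → E) : Fin n → E :=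
  @InnerProductSpace.gramSchmidt ℝ E _ _ _ (Fin n) _
    (inferInstance : LocallyFiniteOrderBot (Fin n))
    (inferInstance : WellFoundedLT (Fin n)) b

lemma LLLAux.sqrt2_pos : (0:ℝ) < Real.sqrt 2 := Real.sqrt_pos.mpr (by norm_num)

/-- Closed form for the geometric-type sum appearing in the LLL coefficient bound. -/
lemma LLLAux.T_closed (d : ℕ) :
    ∑ k ∈ Finset.range d, Real.sqrt 2 ^ (d - k) * (3 / Real.sqrt 2) ^ k
      = 2 * ((3 / Real.sqrt 2) ^ d - Real.sqrt 2 ^ d) := by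
  have hs : Real.sqrt 2 ^ 2 = 2 := Real.sq_sqrt (by norm_num)
  have hs0 : Real.sqrt 2 ≠ 0 := ne_of_gt LLLAux.sqrt2_pos
  induction d with
  | zero => simp
  | succ d ih =>
    rw [Finset.sum_range_succ]
    have hcong : ∀ k ∈ Finset.range d, Real.sqrt 2 ^ (d+1-k) * (3/Real.sqrt 2)^k
        = Real.sqrt 2 * (Real.sqrt 2 ^ (d-k) * (3/Real.sqrt 2)^k) := by
      intro k hk
      have h : d + 1 - k = (d - k) + 1 := by
        have := Finset.mem_range.mp hk; omega
      rw [h, pow_succ]; ring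
    rw [Finset.sum_congr rfl hcong, ← Finset.mul_sum, ih]
    have h1 : d + 1 - d = 1 := by omega
    rw [h1]
    simp only [pow_succ, pow_zero, one_mul]
    have key : Real.sqrt 2 * 3 = 2 * (3 / Real.sqrt 2) := by
      field_simp; nlinarith [hs]
    linear_combination ((3/Real.sqrt 2)^d) * key

/-- Reindexing the sum over indices above `i` as a sum over `range (n - 1 - i)`. -/
lemma LLLAux.reindexT (n : ℕ) [NeZero n] (i : Fin n) :
    ∑ l ∈ Finset.Ioi i, Real.sqrt 2 ^ ((l:ℕ) - (i:ℕ)) * (3/Real.sqrt 2) ^ (n - 1 - (l:ℕ))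
    = ∑ k ∈ Finset.range (n - 1 - (i:ℕ)),
        Real.sqrt 2 ^ ((n-1-(i:ℕ)) - k) * (3/Real.sqrt 2) ^ k := by
  apply Finset.sum_nbij' (i := fun l : Fin n => n - 1 - (l:ℕ))
    (j := fun k => (⟨n - 1 - k, by have := i.isLt; omega⟩ : Fin n))
  · intro a ha
    rw [Finset.mem_Ioi] at ha
    rw [Finset.mem_range]
    have := a.isLt
    have hlt : (i:ℕ) < (a:ℕ) := ha
    omega
  · intro k hk
    rw [Finset.mem_range] at hk
    rw [Finset.mem_Ioi]
    show (i:ℕ) < n - 1 - k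
    omega
  · intro a ha
    rw [Finset.mem_Ioi] at ha
    have := a.isLt
    have hlt : (i:ℕ) < (a:ℕ) := ha
    apply Fin.ext
    show n - 1 - (n - 1 - (a:ℕ)) = (a:ℕ)
    omega
  · intro k hk
    rw [Finset.mem_range] at hk
    show n - 1 - (n - 1 - k) = k
    omega
  · intro a ha
    rw [Finset.mem_Ioi] at ha
    have := a.isLt
    have hlt : (i:ℕ) < (a:ℕ) := ha
    have h1 : (a:ℕ) - (i:ℕ) = (n - 1 - (i:ℕ)) - (n - 1 - (a:ℕ)) := by omega
    rw [h1]

section LLLAuxGeom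
variable {n : ℕ} [NeZero n] {E : Type*} [NormedAddCommGroup E] [InnerProductSpace ℝ E]

lemma LLLAux.gsf_orthogonal (b : Fin n → E) {i j : Fin n} (h : i ≠ j) :
    ⟪gramSchmidtFin b i, gramSchmidtFin b j⟫ = 0 :=
  @InnerProductSpace.gramSchmidt_orthogonal ℝ E _ _ _ (Fin n) _ (inferInstance : LocallyFiniteOrderBot (Fin n))
    (inferInstance : WellFoundedLT (Fin n)) b i j h

lemma LLLAux.gsf_ne_zero (b : Fin n → E) (hb : LinearIndependent ℝ b) (i : Fin n) :
    gramSchmidtFin b i ≠ 0 :=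
  @InnerProductSpace.gramSchmidt_ne_zero ℝ E _ _ _ (Fin n) _ (inferInstance : LocallyFiniteOrderBot (Fin n))
    (inferInstance : WellFoundedLT (Fin n)) b i hb

lemma LLLAux.inner_b_gsf_lt (b : Fin n → E) {l i : Fin n} (h : l < i) :
    ⟪b l, gramSchmidtFin b i⟫ = 0 := by
  rw [real_inner_comm]
  exact @InnerProductSpace.gramSchmidt_inv_triangular ℝ E _ _ _ (Fin n) _
    (inferInstance : LocallyFiniteOrderBot (Fin n))
    (inferInstance : WellFoundedLT (Fin n)) b l i h

lemma LLLAux.inner_b_gsf_self (b : Fin n → E) (i : Fin n) :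
    ⟪b i, gramSchmidtFin b i⟫ = ‖gramSchmidtFin b i‖ ^ 2 := by
  have hdef := @InnerProductSpace.gramSchmidt_def'' ℝ E _ _ _ (Fin n) _
    (inferInstance : LocallyFiniteOrderBot (Fin n))
    (inferInstance : WellFoundedLT (Fin n)) b i
  rw [real_inner_comm]
  conv_lhs => rw [show b i = gramSchmidtFin b i + ∑ j ∈ Finset.Iio i,
      (⟪gramSchmidtFin b j, b i⟫ / (‖gramSchmidtFin b j‖ : ℝ) ^ 2) • gramSchmidtFin b j from hdef]
  rw [inner_add_right, inner_sum, real_inner_self_eq_norm_sq]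
  have h0 : ∀ j ∈ Finset.Iio i, ⟪gramSchmidtFin b i,
      (⟪gramSchmidtFin b j, b i⟫ / (‖gramSchmidtFin b j‖ : ℝ) ^ 2) • gramSchmidtFin b j⟫ = 0 := by
    intro j hj
    rw [real_inner_smul_right, LLLAux.gsf_orthogonal b (Finset.mem_Iio.mp hj).ne', mul_zero]
  rw [Finset.sum_congr rfl h0, Finset.sum_const_zero, add_zero]

lemma LLLAux.norm_step (b : Fin n → E)
    (hsize : ∀ i j : Fin n, j < i →
      |⟪b i, gramSchmidtFin b j⟫ / ‖gramSchmidtFin b j‖ ^ 2| ≤ 1 / 2)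
    (hlovasz : ∀ i j : Fin n, (j : ℕ) + 1 = (i : ℕ) →
      ‖gramSchmidtFin b i +
          (⟪b i, gramSchmidtFin b j⟫ / ‖gramSchmidtFin b j‖ ^ 2) • gramSchmidtFin b j‖ ^ 2 ≥
        3 / 4 * ‖gramSchmidtFin b j‖ ^ 2)
    {i j : Fin n} (h : (j : ℕ) + 1 = (i : ℕ)) :
    ‖gramSchmidtFin b j‖ ^ 2 ≤ 2 * ‖gramSchmidtFin b i‖ ^ 2 := by
  have hji : j < i := by rw [Fin.lt_def]; omega
  set μ : ℝ := ⟪b i, gramSchmidtFin b j⟫ / ‖gramSchmidtFin b j‖ ^ 2 with hμ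
  have h1 := hlovasz i j h
  have hexp : ‖gramSchmidtFin b i + μ • gramSchmidtFin b j‖ ^ 2
      = ‖gramSchmidtFin b i‖ ^ 2 + μ ^ 2 * ‖gramSchmidtFin b j‖ ^ 2 := by
    rw [norm_add_sq_real, real_inner_smul_right, LLLAux.gsf_orthogonal b hji.ne', mul_zero,
      mul_zero, norm_smul, Real.norm_eq_abs, mul_pow, sq_abs]
    ring
  rw [hexp] at h1
  have h2 : |μ| ≤ 1 / 2 := hsize i j hji
  have h3 : μ ^ 2 ≤ 1 / 4 := by nlinarith [sq_abs μ, abs_nonneg μ]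
  nlinarith [sq_nonneg ‖gramSchmidtFin b j‖, sq_nonneg ‖gramSchmidtFin b i‖,
    mul_nonneg (by linarith : (0:ℝ) ≤ 1/4 - μ^2) (sq_nonneg ‖gramSchmidtFin b j‖)]

lemma LLLAux.norm_chain (b : Fin n → E)
    (hsize : ∀ i j : Fin n, j < i →
      |⟪b i, gramSchmidtFin b j⟫ / ‖gramSchmidtFin b j‖ ^ 2| ≤ 1 / 2)
    (hlovasz : ∀ i j : Fin n, (j : ℕ) + 1 = (i : ℕ) →
      ‖gramSchmidtFin b i +
          (⟪b i, gramSchmidtFin b j⟫ / ‖gramSchmidtFin b j‖ ^ 2) • gramSchmidtFin b j‖ ^ 2 ≥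
        3 / 4 * ‖gramSchmidtFin b j‖ ^ 2) :
    ∀ (d : ℕ) (i l : Fin n), (l : ℕ) = (i : ℕ) + d →
      ‖gramSchmidtFin b i‖ ≤ Real.sqrt 2 ^ d * ‖gramSchmidtFin b l‖ := by
  intro d
  induction d with
  | zero =>
    intro i l hl
    have : l = i := Fin.ext (by omega)
    subst this; simp
  | succ d ih =>
    intro i l hl
    have hlt := l.isLt
    set jm : Fin n := ⟨(i : ℕ) + d, by omega⟩ with hjm
    have h1 : ‖gramSchmidtFin b i‖ ≤ Real.sqrt 2 ^ d * ‖gramSchmidtFin b jm‖ := ih i jm rfl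
    have hstep : ‖gramSchmidtFin b jm‖ ^ 2 ≤ 2 * ‖gramSchmidtFin b l‖ ^ 2 :=
      LLLAux.norm_step b hsize hlovasz (by simp [hjm]; omega)
    have h2 : ‖gramSchmidtFin b jm‖ ≤ Real.sqrt 2 * ‖gramSchmidtFin b l‖ := by
      have := Real.sqrt_le_sqrt hstep
      rwa [Real.sqrt_sq (norm_nonneg _), Real.sqrt_mul (by norm_num),
        Real.sqrt_sq (norm_nonneg _)] at this
    calc ‖gramSchmidtFin b i‖ ≤ Real.sqrt 2 ^ d * ‖gramSchmidtFin b jm‖ := h1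
      _ ≤ Real.sqrt 2 ^ d * (Real.sqrt 2 * ‖gramSchmidtFin b l‖) :=
          mul_le_mul_of_nonneg_left h2 (by positivity)
      _ = Real.sqrt 2 ^ (d + 1) * ‖gramSchmidtFin b l‖ := by rw [pow_succ]; ring

end LLLAuxGeom

/-- Lemma 10.1, Lenstra–Lenstra–Lovász. Let `b₁,…,b_n` be an
LLL-reduced basis (size-reduced Gram–Schmidt coefficients `|μ_{ij}| ≤ 1/2` for
`j < i` and the Lovász condition `‖bᵢ* + μ_{i,i−1}·b_{i−1}*‖² ≥ (3/4)‖b_{i−1}*‖²`)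
of a lattice in a real inner product space, with Gram–Schmidt orthogonalization
`bᵢ*`.  Then every lattice vector `x = Σᵢ mᵢ bᵢ` with `mᵢ ∈ ℤ` satisfies
`|mᵢ|·‖bᵢ*‖ ≤ (3/√2)^{n−i}·‖x‖` (indices `i` here are zero-based, running from
`0` to `n−1`, so the exponent is `n−1−i`). -/
theorem lll_coefficient_bound (n : ℕ) [NeZero n]
    (E : Type*) [NormedAddCommGroup E] [InnerProductSpace ℝ E]
    (b : Fin n → E) (hb : LinearIndependent ℝ b)
    (hsize : ∀ i j : Fin n, j < i →
      |⟪b i, gramSchmidtFin b j⟫ / ‖gramSchmidtFin b j‖ ^ 2| ≤ 1 / 2)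
    (hlovasz : ∀ i j : Fin n, (j : ℕ) + 1 = (i : ℕ) →
      ‖gramSchmidtFin b i +
          (⟪b i, gramSchmidtFin b j⟫ / ‖gramSchmidtFin b j‖ ^ 2) • gramSchmidtFin b j‖ ^ 2 ≥
        3 / 4 * ‖gramSchmidtFin b j‖ ^ 2) :
    ∀ (m : Fin n → ℤ) (i : Fin n),
      (|m i| : ℝ) * ‖gramSchmidtFin b i‖ ≤
        (3 / Real.sqrt 2) ^ (n - 1 - (i : ℕ)) * ‖∑ j, (m j : ℝ) • b j‖ := by
  intro m i₀
  set x : E := ∑ j, (m j : ℝ) • b j with hx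
  suffices H : ∀ k : ℕ, ∀ i : Fin n, n - 1 - (i:ℕ) = k →
      (|m i| : ℝ) * ‖gramSchmidtFin b i‖ ≤ (3 / Real.sqrt 2) ^ (n - 1 - (i:ℕ)) * ‖x‖ by
    exact H _ i₀ rfl
  intro k
  induction k using Nat.strong_induction_on with
  | _ k IH =>
  intro i hik
  have hG : (0:ℝ) < ‖gramSchmidtFin b i‖ :=
    norm_pos_iff.mpr (LLLAux.gsf_ne_zero b hb i)
  -- expansion of ⟪x, bᵢ*⟫
  have hsum : ⟪x, gramSchmidtFin b i⟫ = (m i : ℝ) * ‖gramSchmidtFin b i‖ ^ 2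
      + ∑ l ∈ Finset.Ioi i, (m l : ℝ) * ⟪b l, gramSchmidtFin b i⟫ := by
    rw [hx, sum_inner]
    simp_rw [real_inner_smul_left]
    have hvanish : ∀ l ∈ Finset.univ, l ∉ insert i (Finset.Ioi i) →
        (m l : ℝ) * ⟪b l, gramSchmidtFin b i⟫ = 0 := by
      intro l _ hl
      simp only [Finset.mem_insert, Finset.mem_Ioi] at hl
      push_neg at hl
      have hli : l < i := lt_of_le_of_ne hl.2 hl.1
      rw [LLLAux.inner_b_gsf_lt b hli, mul_zero]
    rw [← Finset.sum_subset (Finset.subset_univ (insert i (Finset.Ioi i))) hvanish,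
      Finset.sum_insert (by simp), LLLAux.inner_b_gsf_self]
  set S : ℝ := ∑ l ∈ Finset.Ioi i, (m l : ℝ) * ⟪b l, gramSchmidtFin b i⟫ with hS
  have h1 : (m i : ℝ) * ‖gramSchmidtFin b i‖ ^ 2 = ⟪x, gramSchmidtFin b i⟫ - S := by
    rw [hsum]; ring
  have habs : (|m i| : ℝ) * ‖gramSchmidtFin b i‖ ^ 2 ≤ ‖x‖ * ‖gramSchmidtFin b i‖
      + ∑ l ∈ Finset.Ioi i, (|m l| : ℝ) * |⟪b l, gramSchmidtFin b i⟫| := by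
    have e1 : (|m i| : ℝ) * ‖gramSchmidtFin b i‖ ^ 2
        = |(m i : ℝ) * ‖gramSchmidtFin b i‖ ^ 2| := by
      rw [abs_mul, abs_of_nonneg (sq_nonneg ‖gramSchmidtFin b i‖)]
    have e2 : |⟪x, gramSchmidtFin b i⟫ - S| ≤ |⟪x, gramSchmidtFin b i⟫| + |S| := by
      rw [sub_eq_add_neg]
      exact (abs_add_le _ _).trans (by rw [abs_neg])
    have e3 : |⟪x, gramSchmidtFin b i⟫| ≤ ‖x‖ * ‖gramSchmidtFin b i‖ :=
      abs_real_inner_le_norm _ _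
    have e4 : |S| ≤ ∑ l ∈ Finset.Ioi i, (|m l| : ℝ) * |⟪b l, gramSchmidtFin b i⟫| := by
      refine (Finset.abs_sum_le_sum_abs _ _).trans (le_of_eq ?_)
      refine Finset.sum_congr rfl fun l _ => ?_
      rw [abs_mul]
    rw [e1, h1]
    linarith
  -- per-term bound
  have hterm : ∀ l ∈ Finset.Ioi i, (|m l| : ℝ) * |⟪b l, gramSchmidtFin b i⟫| ≤
      (1/2 * ‖x‖ * ‖gramSchmidtFin b i‖) *
        (Real.sqrt 2 ^ ((l:ℕ) - (i:ℕ)) * (3/Real.sqrt 2) ^ (n - 1 - (l:ℕ))) := by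
    intro l hl
    have hil : i < l := Finset.mem_Ioi.mp hl
    have hilv : (i:ℕ) < (l:ℕ) := hil
    have hln := l.isLt
    have hIH : (|m l| : ℝ) * ‖gramSchmidtFin b l‖ ≤ (3/Real.sqrt 2) ^ (n - 1 - (l:ℕ)) * ‖x‖ :=
      IH (n - 1 - (l:ℕ)) (by omega) l rfl
    have hμ : |⟪b l, gramSchmidtFin b i⟫| ≤ 1/2 * ‖gramSchmidtFin b i‖ ^ 2 := by
      have hs := hsize l i hil
      rw [abs_div, abs_of_nonneg (sq_nonneg ‖gramSchmidtFin b i‖)] at hs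
      exact (div_le_iff₀ (by positivity)).mp hs
    have hchain : ‖gramSchmidtFin b i‖ ≤
        Real.sqrt 2 ^ ((l:ℕ) - (i:ℕ)) * ‖gramSchmidtFin b l‖ :=
      LLLAux.norm_chain b hsize hlovasz ((l:ℕ) - (i:ℕ)) i l (by omega)
    have hM : (0:ℝ) ≤ (|m l| : ℝ) := abs_nonneg _
    calc (|m l| : ℝ) * |⟪b l, gramSchmidtFin b i⟫|
        ≤ (|m l| : ℝ) * (1/2 * ‖gramSchmidtFin b i‖ ^ 2) := mul_le_mul_of_nonneg_left hμ hM
      _ = 1/2 * ‖gramSchmidtFin b i‖ * ((|m l| : ℝ) * ‖gramSchmidtFin b i‖) := by ring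
      _ ≤ 1/2 * ‖gramSchmidtFin b i‖ *
            ((|m l| : ℝ) * (Real.sqrt 2 ^ ((l:ℕ) - (i:ℕ)) * ‖gramSchmidtFin b l‖)) :=
          mul_le_mul_of_nonneg_left (mul_le_mul_of_nonneg_left hchain hM) (by positivity)
      _ = 1/2 * ‖gramSchmidtFin b i‖ *
            (Real.sqrt 2 ^ ((l:ℕ) - (i:ℕ)) * ((|m l| : ℝ) * ‖gramSchmidtFin b l‖)) := by ring
      _ ≤ 1/2 * ‖gramSchmidtFin b i‖ *
            (Real.sqrt 2 ^ ((l:ℕ) - (i:ℕ)) * ((3/Real.sqrt 2) ^ (n - 1 - (l:ℕ)) * ‖x‖)) :=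
          mul_le_mul_of_nonneg_left (mul_le_mul_of_nonneg_left hIH (by positivity))
            (by positivity)
      _ = (1/2 * ‖x‖ * ‖gramSchmidtFin b i‖) *
            (Real.sqrt 2 ^ ((l:ℕ) - (i:ℕ)) * (3/Real.sqrt 2) ^ (n - 1 - (l:ℕ))) := by ring
  have hsumb : ∑ l ∈ Finset.Ioi i, (|m l| : ℝ) * |⟪b l, gramSchmidtFin b i⟫|
      ≤ (1/2 * ‖x‖ * ‖gramSchmidtFin b i‖) *
          (2 * ((3/Real.sqrt 2) ^ (n - 1 - (i:ℕ)) - Real.sqrt 2 ^ (n - 1 - (i:ℕ)))) := by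
    calc ∑ l ∈ Finset.Ioi i, (|m l| : ℝ) * |⟪b l, gramSchmidtFin b i⟫|
        ≤ ∑ l ∈ Finset.Ioi i, (1/2 * ‖x‖ * ‖gramSchmidtFin b i‖) *
            (Real.sqrt 2 ^ ((l:ℕ) - (i:ℕ)) * (3/Real.sqrt 2) ^ (n - 1 - (l:ℕ))) :=
          Finset.sum_le_sum hterm
      _ = (1/2 * ‖x‖ * ‖gramSchmidtFin b i‖) * ∑ l ∈ Finset.Ioi i,
            Real.sqrt 2 ^ ((l:ℕ) - (i:ℕ)) * (3/Real.sqrt 2) ^ (n - 1 - (l:ℕ)) :=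
          (Finset.mul_sum _ _ _).symm
      _ = _ := by rw [LLLAux.reindexT n i, LLLAux.T_closed]
  -- numeric finish
  have hs1 : (1:ℝ) ≤ Real.sqrt 2 := by
    nlinarith [Real.sq_sqrt (show (0:ℝ) ≤ 2 by norm_num), Real.sqrt_nonneg 2]
  have hsd : (1:ℝ) ≤ Real.sqrt 2 ^ (n - 1 - (i:ℕ)) := one_le_pow₀ hs1
  have final : (|m i| : ℝ) * ‖gramSchmidtFin b i‖ ^ 2
      ≤ ((3/Real.sqrt 2) ^ (n - 1 - (i:ℕ)) * ‖x‖) * ‖gramSchmidtFin b i‖ := by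
    have e1 : ‖x‖ * ‖gramSchmidtFin b i‖ + (1/2 * ‖x‖ * ‖gramSchmidtFin b i‖) *
          (2 * ((3/Real.sqrt 2) ^ (n - 1 - (i:ℕ)) - Real.sqrt 2 ^ (n - 1 - (i:ℕ))))
        = ((3/Real.sqrt 2) ^ (n - 1 - (i:ℕ)) * ‖x‖) * ‖gramSchmidtFin b i‖
          + (‖x‖ * ‖gramSchmidtFin b i‖) * (1 - Real.sqrt 2 ^ (n - 1 - (i:ℕ))) := by ring
    have e2 : (‖x‖ * ‖gramSchmidtFin b i‖) * (1 - Real.sqrt 2 ^ (n - 1 - (i:ℕ))) ≤ 0 :=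
      mul_nonpos_of_nonneg_of_nonpos (by positivity) (by linarith)
    linarith
  have := mul_le_mul_of_nonneg_right (le_refl (1:ℝ)) hG.le
  refine le_of_mul_le_mul_right ?_ hG
  calc (|m i| : ℝ) * ‖gramSchmidtFin b i‖ * ‖gramSchmidtFin b i‖
      = (|m i| : ℝ) * ‖gramSchmidtFin b i‖ ^ 2 := by ring
    _ ≤ ((3/Real.sqrt 2) ^ (n - 1 - (i:ℕ)) * ‖x‖) * ‖gramSchmidtFin b i‖ := final
    _ = (3/Real.sqrt 2) ^ (n - 1 - (i:ℕ)) * ‖x‖ * ‖gramSchmidtFin b i‖ := by ring
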